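/- Under assumptions (A1), (A2), (A4), if λ_k ↓ 0 and p_k is a global minimizer of f_{λ_k} over 𝒫 for each k, then every accumulation point of the sequence (p_k) is a global minimizer of the unregularized reduced objective f_u over 𝒫. -/

import Mathlib

open Matrix Filter Topology

noncomputable def sqnorm {k : ℕ} (v : Fin k → ℝ) : ℝ := ∑ i, v i ^ 2

noncomputable def ridgeMin {n m : ℕ} (A : Matrix (Fin n) (Fin m) ℝ)
    (y : Fin n → ℝ) (lam : ℝ) : ℝ :=
  ⨅ w : Fin m → ℝ, ((1 / 2) * sqnorm (A *ᵥ w - y) + (lam / 2) * sqnorm w)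

noncomputable def lsqMin {n m : ℕ} (A : Matrix (Fin n) (Fin m) ℝ)
    (y : Fin n → ℝ) : ℝ :=
  ⨅ w : Fin m → ℝ, (1 / 2) * sqnorm (A *ᵥ w - y)

lemma sqnorm_nonneg {k : ℕ} (v : Fin k → ℝ) : 0 ≤ sqnorm v :=
  Finset.sum_nonneg fun _ _ => sq_nonneg _

lemma sqnorm_eq_dot {k : ℕ} (v : Fin k → ℝ) : sqnorm v = v ⬝ᵥ v := by
  simp [sqnorm, dotProduct, sq]

lemma continuous_sqnorm {k : ℕ} : Continuous (sqnorm (k := k)) := by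
  unfold sqnorm
  exact continuous_finset_sum _ fun i _ => (continuous_apply i).pow 2

/-- The closed-form least-squares solution `(AᵀA)⁻¹ Aᵀ y`. -/
noncomputable def wopt {n m : ℕ} (A : Matrix (Fin n) (Fin m) ℝ) (y : Fin n → ℝ) : Fin m → ℝ :=
  (Aᵀ * A)⁻¹ *ᵥ (Aᵀ *ᵥ y)

lemma isUnit_det_of_rank {n m : ℕ} (A : Matrix (Fin n) (Fin m) ℝ) (h : A.rank = m) :
    IsUnit (Aᵀ * A).det := by
  have h2 : (Aᵀ * A).rank = m := by rw [Matrix.rank_transpose_mul_self]; exact h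
  have hsurj : Function.Surjective (Aᵀ * A).mulVec := by
    have : LinearMap.range (Aᵀ * A).mulVecLin = ⊤ := by
      apply Submodule.eq_top_of_finrank_eq
      rw [← Matrix.rank, h2, Module.finrank_pi]
      simp
    have := LinearMap.range_eq_top.mp this
    exact this
  exact (Matrix.isUnit_iff_isUnit_det _).mp (Matrix.mulVec_surjective_iff_isUnit.mp hsurj)

lemma normal_eq {n m : ℕ} (A : Matrix (Fin n) (Fin m) ℝ) (y : Fin n → ℝ)
    (h : IsUnit (Aᵀ * A).det) : Aᵀ *ᵥ (A *ᵥ wopt A y - y) = 0 := by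
  rw [Matrix.mulVec_sub, wopt, Matrix.mulVec_mulVec, Matrix.mulVec_mulVec,
    Matrix.mul_nonsing_inv _ h, Matrix.one_mulVec, sub_self]

lemma value_ge {n m : ℕ} (A : Matrix (Fin n) (Fin m) ℝ) (y : Fin n → ℝ)
    (h : IsUnit (Aᵀ * A).det) (w : Fin m → ℝ) :
    (1 / 2 : ℝ) * sqnorm (A *ᵥ wopt A y - y) ≤ (1 / 2) * sqnorm (A *ᵥ w - y) := by
  set w0 := wopt A y with hw0
  set u := A *ᵥ (w - w0) with hu
  set v := A *ᵥ w0 - y with hv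
  have hsplit : A *ᵥ w - y = u + v := by
    rw [hu, hv, Matrix.mulVec_sub]; abel
  have hcross : u ⬝ᵥ v = 0 := by
    rw [hu, dotProduct_comm, Matrix.dotProduct_mulVec, ← Matrix.mulVec_transpose,
      normal_eq A y h, zero_dotProduct]
  have hexp : sqnorm (A *ᵥ w - y) = sqnorm u + sqnorm v := by
    rw [hsplit, sqnorm_eq_dot, sqnorm_eq_dot, sqnorm_eq_dot, add_dotProduct,
      dotProduct_add, dotProduct_add, hcross, dotProduct_comm v u, hcross]
    ring
  have := sqnorm_nonneg u
  rw [hexp]; linarith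

lemma bdd_lsq {n m : ℕ} (A : Matrix (Fin n) (Fin m) ℝ) (y : Fin n → ℝ) :
    BddBelow (Set.range fun w : Fin m → ℝ => (1 / 2 : ℝ) * sqnorm (A *ᵥ w - y)) := by
  refine ⟨0, fun x hx => ?_⟩
  obtain ⟨w, rfl⟩ := hx
  have := sqnorm_nonneg (A *ᵥ w - y); linarith

lemma bdd_ridge {n m : ℕ} (A : Matrix (Fin n) (Fin m) ℝ) (y : Fin n → ℝ) {lam : ℝ}
    (hlam : 0 ≤ lam) :
    BddBelow (Set.range fun w : Fin m → ℝ =>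
      (1 / 2 : ℝ) * sqnorm (A *ᵥ w - y) + lam / 2 * sqnorm w) := by
  refine ⟨0, fun x hx => ?_⟩
  obtain ⟨w, rfl⟩ := hx
  have h1 := sqnorm_nonneg (A *ᵥ w - y)
  have h2 := sqnorm_nonneg w
  nlinarith

lemma lsqMin_eq {n m : ℕ} (A : Matrix (Fin n) (Fin m) ℝ) (y : Fin n → ℝ)
    (h : A.rank = m) :
    lsqMin A y = (1 / 2) * sqnorm (A *ᵥ wopt A y - y) := by
  have hu := isUnit_det_of_rank A h
  exact le_antisymm (ciInf_le (bdd_lsq A y) (wopt A y)) (le_ciInf (value_ge A y hu))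

set_option maxHeartbeats 400000 in
lemma continuousAt_val {n m : ℕ} (y : Fin n → ℝ) (A0 : Matrix (Fin n) (Fin m) ℝ)
    (h : IsUnit (A0ᵀ * A0).det) :
    ContinuousAt (fun A : Matrix (Fin n) (Fin m) ℝ =>
      (1 / 2 : ℝ) * sqnorm (A *ᵥ wopt A y - y)) A0 := by
  have hinv : ContinuousAt (fun A : Matrix (Fin n) (Fin m) ℝ => (Aᵀ * A)⁻¹) A0 := by
    have hc : Continuous (fun A : Matrix (Fin n) (Fin m) ℝ => Aᵀ * A) :=
      (continuous_id.matrix_transpose).matrix_mul continuous_id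
    have hring : ContinuousAt Ring.inverse (A0ᵀ * A0).det := by
      have := NormedRing.inverse_continuousAt h.unit
      rwa [h.unit_spec] at this
    exact ContinuousAt.comp (f := fun A : Matrix (Fin n) (Fin m) ℝ => Aᵀ * A)
      (g := Inv.inv) (continuousAt_matrix_inv _ hring) hc.continuousAt
  have hpair : ContinuousAt (fun A : Matrix (Fin n) (Fin m) ℝ => (A, (Aᵀ * A)⁻¹)) A0 :=
    continuousAt_id.prodMk hinv
  have hH : Continuous (fun p : Matrix (Fin n) (Fin m) ℝ × Matrix (Fin m) (Fin m) ℝ =>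
      (1 / 2 : ℝ) * sqnorm (p.1 *ᵥ (p.2 *ᵥ (p.1ᵀ *ᵥ y)) - y)) := by
    apply continuous_const.mul
    apply continuous_sqnorm.comp
    apply Continuous.sub _ continuous_const
    apply Continuous.matrix_mulVec continuous_fst
    apply Continuous.matrix_mulVec continuous_snd
    exact Continuous.matrix_mulVec (continuous_fst.matrix_transpose) continuous_const
  have : ContinuousAt ((fun p : Matrix (Fin n) (Fin m) ℝ × Matrix (Fin m) (Fin m) ℝ =>
      (1 / 2 : ℝ) * sqnorm (p.1 *ᵥ (p.2 *ᵥ (p.1ᵀ *ᵥ y)) - y)) ∘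
      (fun A : Matrix (Fin n) (Fin m) ℝ => (A, (Aᵀ * A)⁻¹))) A0 := hH.continuousAt.comp hpair
  exact this

lemma lsq_le_ridge {n m : ℕ} (A : Matrix (Fin n) (Fin m) ℝ) (y : Fin n → ℝ) {lam : ℝ}
    (hlam : 0 ≤ lam) : lsqMin A y ≤ ridgeMin A y lam := by
  refine le_ciInf fun w => ?_
  refine (ciInf_le (bdd_lsq A y) w).trans ?_
  have := sqnorm_nonneg w
  nlinarith

lemma ridge_le_value {n m : ℕ} (A : Matrix (Fin n) (Fin m) ℝ) (y : Fin n → ℝ) {lam : ℝ}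
    (hlam : 0 ≤ lam) (w : Fin m → ℝ) :
    ridgeMin A y lam ≤ (1 / 2) * sqnorm (A *ᵥ w - y) + lam / 2 * sqnorm w :=
  ciInf_le (bdd_ridge A y hlam) w

/-- Consistency of ridge-regularized minimizers: under (A1) compactness, (A2)
continuity, and (A4) uniform full column rank, if `λ_k ↓ 0` and `p_k` is a global
minimizer of `f_{λ_k}` over `𝒫`, then every accumulation point of `(p_k)` is a
global minimizer of `f_u` over `𝒫`. -/
theorem ridge_consistency_accumulation_points (d n m : ℕ)
    (P : Set (Fin d → ℝ)) (hPc : IsCompact P)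
    (M : (Fin d → ℝ) → Matrix (Fin n) (Fin m) ℝ) (hM : ContinuousOn M P)
    (hrank : ∀ p ∈ P, (M p).rank = m)
    (y : Fin n → ℝ)
    (lamSeq : ℕ → ℝ) (hpos : ∀ k, 0 < lamSeq k) (hanti : Antitone lamSeq)
    (hlim : Tendsto lamSeq atTop (𝓝 0))
    (pk : ℕ → (Fin d → ℝ)) (hpkP : ∀ k, pk k ∈ P)
    (hmin : ∀ k, ∀ q ∈ P, ridgeMin (M (pk k)) y (lamSeq k) ≤ ridgeMin (M q) y (lamSeq k)) :
    ∀ q : Fin d → ℝ, MapClusterPt q atTop pk →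
      q ∈ P ∧ ∀ q' ∈ P, lsqMin (M q) y ≤ lsqMin (M q') y := by
  intro q hq
  obtain ⟨φ, hφ, htend⟩ := TopologicalSpace.FirstCountableTopology.tendsto_subseq hq
  have hqP : q ∈ P :=
    hPc.isClosed.mem_of_tendsto htend (Eventually.of_forall fun j => hpkP _)
  refine ⟨hqP, fun q' hq' => ?_⟩
  -- convergence of matrices along the subsequence
  have hMt : Tendsto (fun j => M (pk (φ j))) atTop (𝓝 (M q)) := by
    have h1 : Tendsto (pk ∘ φ) atTop (𝓝[P] q) :=
      tendsto_nhdsWithin_of_tendsto_nhds_of_eventually_within _ htend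
        (Eventually.of_forall fun j => hpkP _)
    exact ((hM q hqP).tendsto).comp h1
  -- the least-squares value converges along the subsequence
  have hval : Tendsto (fun j => lsqMin (M (pk (φ j))) y) atTop (𝓝 (lsqMin (M q) y)) := by
    have hcont := continuousAt_val y (M q) (isUnit_det_of_rank _ (hrank q hqP))
    have h2 : Tendsto (fun j => (1 / 2 : ℝ) * sqnorm (M (pk (φ j)) *ᵥ
        wopt (M (pk (φ j))) y - y)) atTop
        (𝓝 ((1 / 2) * sqnorm (M q *ᵥ wopt (M q) y - y))) := hcont.tendsto.comp hMt
    rw [lsqMin_eq _ _ (hrank q hqP)]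
    refine h2.congr fun j => ?_
    rw [lsqMin_eq _ _ (hrank _ (hpkP _))]
  -- ε-argument
  refine le_of_forall_pos_le_add fun ε hε => ?_
  obtain ⟨w', hw'⟩ : ∃ w' : Fin m → ℝ, (1 / 2 : ℝ) * sqnorm (M q' *ᵥ w' - y) <
      lsqMin (M q') y + ε / 2 := by
    apply exists_lt_of_ciInf_lt
    simpa [lsqMin] using by linarith [show (0:ℝ) < ε/2 by linarith]
  -- bound for each index
  have hbound : ∀ j, lsqMin (M (pk (φ j))) y ≤
      lsqMin (M q') y + ε / 2 + lamSeq (φ j) / 2 * sqnorm w' := by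
    intro j
    have h1 := lsq_le_ridge (M (pk (φ j))) y (le_of_lt (hpos (φ j)))
    have h2 := hmin (φ j) q' hq'
    have h3 := ridge_le_value (M q') y (le_of_lt (hpos (φ j))) w'
    linarith
  have hlam2 : Tendsto (fun j => lsqMin (M q') y + ε / 2 + lamSeq (φ j) / 2 * sqnorm w')
      atTop (𝓝 (lsqMin (M q') y + ε / 2 + 0)) := by
    apply Tendsto.add tendsto_const_nhds
    have : Tendsto (fun j => lamSeq (φ j)) atTop (𝓝 0) :=
      hlim.comp hφ.tendsto_atTop
    simpa using (this.div_const 2).mul_const (sqnorm w')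
  have := le_of_tendsto_of_tendsto' hval hlam2 hbound
  linarith
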